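/- Let κ < λ be regular cardinals with 2^κ ≥ λ, and let P be a κ⁺-closed partial order. If T is a λ-tree, then forcing with P adds no new cofinal branch to T; i.e., every cofinal branch of T in a P-generic extension lies in the ground model. -/

import Mathlib

open Cardinal

universe u

/-- A partial order is κ-closed if every decreasing sequence of conditions of
length (order type) less than κ has a lower bound; κ⁺-closed thus means every
decreasing sequence of length ≤ κ has a lower bound. -/
def KClosed (κ : Cardinal.{u}) (P : Type u) [Preorder P] : Prop :=
  ∀ (ι : Type u) [LinearOrder ι] [WellFoundedLT ι], #ι < κ →
    ∀ f : ι → P, Antitone f → ∃ b, ∀ i, b ≤ f i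

/-- A λ-tree: a partial order in which the set of predecessors of every node is
well-ordered (witnessed by the level function `lvl`), of height λ, with all
levels of size less than λ. -/
structure KTree (lam : Cardinal.{u}) where
  carrier : Type u
  po : PartialOrder carrier
  lvl : carrier → Ordinal.{u}
  lvl_lt : ∀ t, lvl t < lam.ord
  lvl_strictMono : ∀ s t, po.lt s t → lvl s < lvl t
  preds : ∀ t, ∀ β < lvl t, ∃! s, po.lt s t ∧ lvl s = β
  levels_nonempty : ∀ β < lam.ord, ∃ t, lvl t = β
  levels_small : ∀ β, #{t // lvl t = β} < lam

/-- A cofinal branch: a chain of the tree meeting every level. -/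
def IsCofBranch {lam : Cardinal.{u}} (S : KTree lam) (b : Set S.carrier) : Prop :=
  (∀ s ∈ b, ∀ t ∈ b, S.po.le s t ∨ S.po.le t s) ∧ ∀ β < lam.ord, ∃ t ∈ b, S.lvl t = β

/-- A `P`-name for a cofinal branch of the tree `S`: `F p t` states that the
condition `p` forces `t` to belong to the named branch. -/
structure BranchName (P : Type u) [Preorder P] {lam : Cardinal.{u}} (S : KTree lam) where
  F : P → S.carrier → Prop
  mono : ∀ p q t, p ≤ q → F q t → F p t
  forcesChain : ∀ p s t, F p s → F p t → S.po.le s t ∨ S.po.le t s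
  cof : ∀ p : P, ∀ β < lam.ord, ∃ q, q ≤ p ∧ ∃ t, S.lvl t = β ∧ F q t

section SilverAux

variable {P : Type u} [Preorder P]

/-- Choice of a lower bound of a family, if one exists; `d` otherwise. -/
noncomputable def limChoice {α : Ordinal.{u}} (G : ∀ β, β < α → P) (d : P) : P :=
  @dite P (∃ b : P, ∀ β (hβ : β < α), b ≤ G β hβ) (Classical.dec _)
    (fun h => h.choose) (fun _ => d)

theorem limChoice_le {α : Ordinal.{u}} {G : ∀ β, β < α → P} {d : P}
    (h : ∃ b : P, ∀ β (hβ : β < α), b ≤ G β hβ) (β : Ordinal.{u}) (hβ : β < α) :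
    limChoice G d ≤ G β hβ := by
  rw [limChoice, dif_pos h]; exact h.choose_spec β hβ

/-- The transfinite construction of a binary tree of conditions: at successor steps
apply `r0` or `r1` according to the bit of `x`, at limits take a chosen lower bound. -/
noncomputable def build (p : P) (r0 r1 : P → P) (o : Ordinal.{u}) (x : o.ToType → Bool)
    (α : Ordinal.{u}) : P :=
  Ordinal.limitRecOn α p
    (fun β ih =>
      if h : β < o then
        (if x ((Ordinal.ToType.mk (o := o)) ⟨β, h⟩) = true then r1 ih else r0 ih)
      else ih)
    (fun _ _ ih => limChoice ih p)

theorem build_zero (p : P) (r0 r1 : P → P) (o : Ordinal.{u}) (x : o.ToType → Bool) :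
    build p r0 r1 o x 0 = p := by
  simp only [build, Ordinal.limitRecOn_zero]

theorem build_succ (p : P) (r0 r1 : P → P) (o : Ordinal.{u}) (x : o.ToType → Bool)
    (β : Ordinal.{u}) :
    build p r0 r1 o x (β + 1) =
      if h : β < o then
        (if x ((Ordinal.ToType.mk (o := o)) ⟨β, h⟩) = true then r1 (build p r0 r1 o x β)
          else r0 (build p r0 r1 o x β))
      else build p r0 r1 o x β := by
  simp only [build, Ordinal.add_one_eq_succ, Ordinal.limitRecOn_succ]

theorem build_limit (p : P) (r0 r1 : P → P) (o : Ordinal.{u}) (x : o.ToType → Bool)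
    {α : Ordinal.{u}} (hα : Order.IsSuccLimit α) :
    build p r0 r1 o x α = limChoice (α := α) (fun β _ => build p r0 r1 o x β) p := by
  simp only [build]
  rw [Ordinal.limitRecOn_limit _ _ _ _ hα]

theorem build_antitone (p : P) (r0 r1 : P → P) (o : Ordinal.{u})
    (hr0 : ∀ q, q ≤ p → r0 q ≤ q) (hr1 : ∀ q, q ≤ p → r1 q ≤ q)
    (hlb : ∀ α : Ordinal.{u}, Order.IsSuccLimit α → α ≤ o → ∀ g : Ordinal.{u} → P,
      (∀ β γ, β ≤ γ → γ < α → g γ ≤ g β) → ∃ b : P, ∀ β < α, b ≤ g β)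
    (x : o.ToType → Bool) :
    ∀ α, α ≤ o → ∀ β ≤ α, build p r0 r1 o x α ≤ build p r0 r1 o x β := by
  intro α
  induction α using Ordinal.limitRecOn with
  | zero =>
    intro _ β hβ
    rw [nonpos_iff_eq_zero.mp hβ]
  | add_one γ ih =>
    intro hle β hβ
    have hγo : γ ≤ o := ((Order.lt_succ γ).trans_le hle).le
    have hγp : build p r0 r1 o x γ ≤ p := by
      have := ih hγo 0 (zero_le (a := γ))
      rwa [build_zero] at this
    have hstep : build p r0 r1 o x (Order.succ γ) ≤ build p r0 r1 o x γ := by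
      rw [← Ordinal.add_one_eq_succ, build_succ]
      split_ifs
      exacts [hr1 _ hγp, hr0 _ hγp, le_refl _]
    rcases eq_or_lt_of_le hβ with h | h
    · rw [h]
    · exact hstep.trans (ih hγo β (Order.lt_succ_iff.mp h))
  | limit α hα ih =>
    intro hle β hβ
    have hanti : ∀ β γ, β ≤ γ → γ < α →
        build p r0 r1 o x γ ≤ build p r0 r1 o x β :=
      fun β γ h1 h2 => ih γ h2 (h2.le.trans hle) β h1
    have hex := hlb α hα hle (build p r0 r1 o x) hanti
    rcases eq_or_lt_of_le hβ with h | h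
    · rw [h]
    · rw [build_limit p r0 r1 o x hα]
      exact limChoice_le hex β h

theorem build_local (p : P) (r0 r1 : P → P) (o : Ordinal.{u}) :
    ∀ α (x y : o.ToType → Bool),
      (∀ (β : Ordinal.{u}) (h : β < o), β < α →
        x ((Ordinal.ToType.mk (o := o)) ⟨β, h⟩) = y ((Ordinal.ToType.mk (o := o)) ⟨β, h⟩)) →
      build p r0 r1 o x α = build p r0 r1 o y α := by
  intro α
  induction α using Ordinal.limitRecOn with
  | zero =>
    intro x y _
    rw [build_zero, build_zero]
  | add_one γ ih =>
    intro x y hxy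
    have hB : build p r0 r1 o x γ = build p r0 r1 o y γ :=
      ih x y fun β h hβ => hxy β h (hβ.trans (Order.lt_succ γ))
    rw [build_succ, build_succ, hB]
    by_cases h : γ < o
    · rw [dif_pos h, dif_pos h, hxy γ h (Order.lt_succ γ)]
    · rw [dif_neg h, dif_neg h]
  | limit α hα ih =>
    intro x y hxy
    rw [build_limit p r0 r1 o x hα, build_limit p r0 r1 o y hα]
    have hG : (fun β (_ : β < α) => build p r0 r1 o x β)
        = fun β (_ : β < α) => build p r0 r1 o y β := by
      funext β hβ
      exact ih β hβ x y fun γ h hγ => hxy γ h (hγ.trans hβ)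
    rw [hG]

end SilverAux

section TreeAux

variable {lam : Cardinal.{u}}

/-- Any two strict predecessors of a node of a tree are comparable. -/
theorem KTree.comp_of_lt (S : KTree lam) {t s₁ s₂ : S.carrier}
    (h₁ : S.po.lt s₁ t) (h₂ : S.po.lt s₂ t) : S.po.le s₁ s₂ ∨ S.po.le s₂ s₁ := by
  letI := S.po
  have key : ∀ s₁ s₂ : S.carrier, S.po.lt s₁ t → S.po.lt s₂ t →
      S.lvl s₁ ≤ S.lvl s₂ → S.po.le s₁ s₂ := by
    intro s₁ s₂ h₁ h₂ hl
    rcases eq_or_lt_of_le hl with he | hlt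
    · obtain ⟨s, -, hu⟩ := S.preds t (S.lvl s₁) (S.lvl_strictMono _ _ h₁)
      have e1 := hu s₁ ⟨h₁, rfl⟩
      have e2 := hu s₂ ⟨h₂, he.symm⟩
      rw [e1, ← e2]
    · obtain ⟨s, ⟨hs2, hlv⟩, -⟩ := S.preds s₂ (S.lvl s₁) hlt
      obtain ⟨s', -, hu⟩ := S.preds t (S.lvl s₁) (S.lvl_strictMono _ _ h₁)
      have e1 := hu s₁ ⟨h₁, rfl⟩
      have e2 := hu s ⟨lt_trans hs2 h₂, hlv⟩
      have : s₁ = s := by rw [e1, e2]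
      rw [this]
      exact le_of_lt hs2
  rcases le_total (S.lvl s₁) (S.lvl s₂) with h | h
  · exact Or.inl (key s₁ s₂ h₁ h₂ h)
  · exact Or.inr (key s₂ s₁ h₂ h₁ h)

/-- If two nodes are comparable and the level of the first is at most the level
of the second, then the first is below the second. -/
theorem KTree.le_of_comp (S : KTree lam) {s t : S.carrier}
    (h : S.po.le s t ∨ S.po.le t s) (hl : S.lvl s ≤ S.lvl t) : S.po.le s t := by
  letI := S.po
  rcases h with h | h
  · exact h
  · rcases eq_or_lt_of_le h with he | hlt
    · exact le_of_eq he.symm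
    · exact absurd (S.lvl_strictMono _ _ hlt) (not_lt.mpr hl)

end TreeAux

/-- Silver's branch lemma: if κ < λ are regular, 2^κ ≥ λ and `P` is κ⁺-closed,
then forcing with `P` adds no new cofinal branch to a λ-tree: every cofinal
branch of the tree in a `P`-generic extension lies in the ground model. -/
theorem silver_no_new_branch {κ lam : Cardinal.{u}}
    (hκ : κ.IsRegular) (hlam : lam.IsRegular) (hlt : κ < lam)
    (hpow : lam ≤ 2 ^ κ)
    {P : Type u} [PartialOrder P] (hclosed : KClosed (Order.succ κ) P)
    (S : KTree lam) (N : BranchName P S) :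
    ∀ p : P, ∃ q, q ≤ p ∧ ∃ b : Set S.carrier, IsCofBranch S b ∧
      ∀ r, r ≤ q → ∀ t, N.F r t → t ∈ b := by
  intro p
  by_cases hq : ∃ q, q ≤ p ∧ ∀ r₀ r₁ t₀ t₁, r₀ ≤ q → r₁ ≤ q → N.F r₀ t₀ → N.F r₁ t₁ →
      (S.po.le t₀ t₁ ∨ S.po.le t₁ t₀)
  · obtain ⟨q, hqp, hns⟩ := hq
    refine ⟨q, hqp, {t | ∃ r, r ≤ q ∧ N.F r t}, ⟨?_, ?_⟩, ?_⟩
    · rintro s ⟨r, hr, hFs⟩ t ⟨r', hr', hFt⟩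
      exact hns r r' s t hr hr' hFs hFt
    · intro β hβ
      obtain ⟨q', hq', t, ht, hF⟩ := N.cof q β hβ
      exact ⟨t, ⟨q', hq', hF⟩, ht⟩
    · intro r hr t hF
      exact ⟨r, hr, hF⟩
  · exfalso
    push_neg at hq
    -- a nonempty carrier
    have hlam0 : (0 : Ordinal) < lam.ord := by
      rw [Cardinal.lt_ord, Ordinal.card_zero]
      exact hlam.pos
    obtain ⟨tdef, -⟩ := S.levels_nonempty 0 hlam0
    -- total splitting function
    have hsk : ∀ q : P, ∃ z : (P × P) × S.carrier × S.carrier, q ≤ p →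
        z.1.1 ≤ q ∧ z.1.2 ≤ q ∧ N.F z.1.1 z.2.1 ∧ N.F z.1.2 z.2.2 ∧
        ¬ S.po.le z.2.1 z.2.2 ∧ ¬ S.po.le z.2.2 z.2.1 := by
      intro q
      by_cases h : q ≤ p
      · obtain ⟨r₀, r₁, t₀, t₁, h1, h2, h3, h4, h5⟩ := hq q h
        exact ⟨((r₀, r₁), (t₀, t₁)), fun _ => ⟨h1, h2, h3, h4, h5.1, h5.2⟩⟩
      · exact ⟨((q, q), (tdef, tdef)), fun hc => absurd hc h⟩
    choose sp hsp using hsk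
    set r0 : P → P := fun q => (sp q).1.1 with hr0def
    set r1 : P → P := fun q => (sp q).1.2 with hr1def
    set u0 : P → S.carrier := fun q => (sp q).2.1 with hu0def
    set u1 : P → S.carrier := fun q => (sp q).2.2 with hu1def
    -- the minimal cardinal μ with lam ≤ 2 ^ μ
    set μ := sInf {ν : Cardinal.{u} | lam ≤ 2 ^ ν} with hμdef
    have hκmem : κ ∈ {ν : Cardinal.{u} | lam ≤ 2 ^ ν} := hpow
    have hμmem : lam ≤ 2 ^ μ := csInf_mem ⟨κ, hκmem⟩
    have hμκ : μ ≤ κ := csInf_le' hpow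
    have hμmin : ∀ ν < μ, 2 ^ ν < lam := by
      intro ν hν
      by_contra hc
      have : μ ≤ ν := csInf_le' (show ν ∈ {ν : Cardinal.{u} | lam ≤ 2 ^ ν} from le_of_not_gt hc)
      exact absurd this (not_le.mpr hν)
    have hμinf : ℵ₀ ≤ μ := by
      by_contra h
      push_neg at h
      have h2 : (2 : Cardinal) < ℵ₀ := by exact_mod_cast Cardinal.nat_lt_aleph0 2
      exact absurd (hμmem.trans_lt (Cardinal.power_lt_aleph0 h2 h))
        (not_lt.mpr hlam.aleph0_le)
    set o := μ.ord with hodef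
    have holim : Order.IsSuccLimit o := Cardinal.isSuccLimit_ord hμinf
    haveI : IsWellOrder o.ToType (· < ·) := isWellOrder_lt
    have hμlam : μ < lam := hμκ.trans_lt hlt
    have hcardo : o.card = μ := Cardinal.card_ord μ
    -- lower bounds at limits, from closedness
    have hlb : ∀ α : Ordinal.{u}, Order.IsSuccLimit α → α ≤ o → ∀ g : Ordinal.{u} → P,
        (∀ β γ, β ≤ γ → γ < α → g γ ≤ g β) → ∃ b : P, ∀ β < α, b ≤ g β := by
      intro α hα hαo g hg
      have hcard : #α.ToType < Order.succ κ := by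
        rw [Cardinal.mk_toType]
        exact lt_of_le_of_lt (le_trans (Ordinal.card_le_card hαo) (hcardo ▸ hμκ))
          (Order.lt_succ κ)
      have hanti : Antitone (fun i : α.ToType =>
          g ((((Ordinal.ToType.mk (o := α))).symm i : Set.Iio α) : Ordinal.{u})) := by
        intro i j hij
        refine hg _ _ ?_ (((Ordinal.ToType.mk (o := α))).symm j).2
        exact_mod_cast ((Ordinal.ToType.mk (o := α))).symm.le_iff_le.mpr hij
      obtain ⟨b, hb⟩ := hclosed α.ToType hcard _ hanti
      refine ⟨b, fun β hβ => ?_⟩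
      have := hb ((Ordinal.ToType.mk (o := α)) ⟨β, hβ⟩)
      rwa [OrderIso.symm_apply_apply] at this
    have hr0le : ∀ q, q ≤ p → r0 q ≤ q := fun q h => (hsp q h).1
    have hr1le : ∀ q, q ≤ p → r1 q ≤ q := fun q h => (hsp q h).2.1
    have hmono := build_antitone p r0 r1 o hr0le hr1le hlb
    have hle_p : ∀ (x : o.ToType → Bool) α, α ≤ o → build p r0 r1 o x α ≤ p := by
      intro x α h
      have := hmono x α h 0 (zero_le (a := α))
      rwa [build_zero] at this
    -- the split nodes
    set bn : (o.ToType → Bool) → Ordinal.{u} → S.carrier := fun x β =>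
      if h : β < o then
        (if x ((Ordinal.ToType.mk (o := o)) ⟨β, h⟩) = true then u1 (build p r0 r1 o x β)
          else u0 (build p r0 r1 o x β))
      else tdef with hbndef
    have hforce : ∀ (x : o.ToType → Bool) (β : Ordinal.{u}) (h : β < o),
        N.F (build p r0 r1 o x (β + 1)) (bn x β) := by
      intro x β h
      rw [build_succ, hbndef]
      simp only [dif_pos h]
      by_cases hb : x ((Ordinal.ToType.mk (o := o)) ⟨β, h⟩) = true
      · rw [if_pos hb, if_pos hb]
        exact (hsp _ (hle_p x β h.le)).2.2.2.1
      · rw [if_neg hb, if_neg hb]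
        exact (hsp _ (hle_p x β h.le)).2.2.1
    -- the levels of all possible split nodes are bounded by βstar < lam.ord
    set xext : ∀ a : o.ToType, ({c : o.ToType // c ≤ a} → Bool) → o.ToType → Bool :=
      fun a s c => if h : c ≤ a then s ⟨c, h⟩ else false with hxextdef
    set ℓ : (Σ a : o.ToType, ({c : o.ToType // c ≤ a} → Bool)) → Ordinal.{u} := fun i =>
      S.lvl (bn (xext i.1 i.2) (Ordinal.typein (α := o.ToType) (· < ·) i.1)) with hℓdef
    have hIcard : #(Σ a : o.ToType, ({c : o.ToType // c ≤ a} → Bool)) < lam := by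
      rw [Cardinal.mk_sigma]
      refine Cardinal.sum_lt_of_isRegular hlam ?_ ?_
      · rw [Cardinal.mk_toType, hcardo]; exact hμlam
      · intro a
        have hinj : #{c : o.ToType // c ≤ a} ≤ #(Option {c : o.ToType // c < a}) := by
          refine Cardinal.mk_le_of_injective (f := fun c =>
            if h : (c : o.ToType) < a then some ⟨c.1, h⟩ else none) ?_
          intro c d hcd
          dsimp only at hcd
          by_cases h1 : (c : o.ToType) < a
          · by_cases h2 : (d : o.ToType) < a
            · rw [dif_pos h1, dif_pos h2, Option.some.injEq] at hcd
              simp only [Subtype.mk.injEq] at hcd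
              exact Subtype.ext hcd
            · rw [dif_pos h1, dif_neg h2] at hcd; cases hcd
          · by_cases h2 : (d : o.ToType) < a
            · rw [dif_neg h1, dif_pos h2] at hcd; cases hcd
            · exact Subtype.ext ((le_antisymm c.2 (not_lt.mp h1)).trans
                (le_antisymm d.2 (not_lt.mp h2)).symm)
        have hlt' : #{c : o.ToType // c ≤ a} < μ := by
          refine lt_of_le_of_lt hinj ?_
          rw [Cardinal.mk_option]
          refine Cardinal.add_lt_of_lt hμinf ?_ (one_lt_aleph0.trans_le hμinf)
          have : #{c : o.ToType // c < a}
              = (Ordinal.typein (α := o.ToType) (· < ·) a).card :=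
            Ordinal.card_typein a
          rw [this, ← Cardinal.lt_ord]
          exact Ordinal.typein_lt_self a
        have : #({c : o.ToType // c ≤ a} → Bool) = 2 ^ #{c : o.ToType // c ≤ a} := by
          rw [Cardinal.mk_arrow, Cardinal.lift_uzero, Cardinal.mk_bool, Cardinal.lift_two]
        rw [this]
        exact hμmin _ hlt'
    set βstar : Ordinal.{u} := ⨆ i, ℓ i with hβstardef
    have hβstar : βstar < lam.ord := by
      refine Ordinal.iSup_lt_ord ?_ fun i => S.lvl_lt _
      rw [hlam.cof_eq]
      exact hIcard
    -- every split node has level at most βstar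
    have hbn_lvl : ∀ (x : o.ToType → Bool) (β : Ordinal.{u}) (h : β < o),
        S.lvl (bn x β) ≤ βstar := by
      intro x β h
      set a : o.ToType := (Ordinal.ToType.mk (o := o)) ⟨β, h⟩ with hadef
      have hta : Ordinal.typein (α := o.ToType) (· < ·) a = β := by
        rw [hadef, Ordinal.ToType.mk_apply]; exact Ordinal.typein_enum _ _
      set s : {c : o.ToType // c ≤ a} → Bool := fun c => x c.1 with hsdef
      have hagree : ∀ c : o.ToType, c ≤ a → xext a s c = x c := by
        intro c hc
        rw [hxextdef]
        simp only [dif_pos hc]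
        rfl
      have hbuild : build p r0 r1 o (xext a s) β = build p r0 r1 o x β := by
        refine build_local p r0 r1 o β (xext a s) x fun γ hγ hγβ => ?_
        refine hagree _ ?_
        have : Ordinal.typein (α := o.ToType) (· < ·) ((Ordinal.ToType.mk (o := o)) ⟨γ, hγ⟩) = γ := by
          rw [Ordinal.ToType.mk_apply]; exact Ordinal.typein_enum _ _
        have hlt2 : Ordinal.typein (α := o.ToType) (· < ·) ((Ordinal.ToType.mk (o := o)) ⟨γ, hγ⟩)
            < Ordinal.typein (α := o.ToType) (· < ·) a := by
          rw [this, hta]; exact hγβ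
        exact le_of_lt ((Ordinal.typein_lt_typein _).mp hlt2)
      have hbit : xext a s a = x a := hagree a le_rfl
      have hbneq : bn (xext a s) β = bn x β := by
        rw [hbndef]
        simp only [dif_pos h]
        rw [← hadef, hbit, hbuild]
      have : ℓ ⟨a, s⟩ ≤ βstar := Ordinal.le_iSup ℓ _
      rw [hℓdef] at this
      simp only [hta] at this
      rwa [hbneq] at this
    -- pick nodes at level βstar below each branch of the construction
    have hcof : ∀ x : o.ToType → Bool, ∃ rt : P × S.carrier,
        rt.1 ≤ build p r0 r1 o x o ∧ S.lvl rt.2 = βstar ∧ N.F rt.1 rt.2 := by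
      intro x
      obtain ⟨q', h1, t, h2, h3⟩ := N.cof (build p r0 r1 o x o) βstar hβstar
      exact ⟨(q', t), h1, h2, h3⟩
    choose rt hrt1 hrt2 hrt3 using hcof
    -- the assignment x ↦ node is injective
    have hmain : ∀ x y : o.ToType → Bool, ∀ a : o.ToType,
        (∀ c : o.ToType, c < a → x c = y c) → x a = true → y a = false →
        (rt x).2 ≠ (rt y).2 := by
      intro x y a hagr hxa hya heq
      set β := Ordinal.typein (α := o.ToType) (· < ·) a with hβdef
      have hβo : β < o := Ordinal.typein_lt_self a
      have hpos : (Ordinal.ToType.mk (o := o)) ⟨β, hβo⟩ = a := by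
        rw [Ordinal.ToType.mk_apply]
        exact Ordinal.enum_typein _ a
      have hagree : ∀ (γ : Ordinal.{u}) (hγ : γ < o), γ < β →
          x ((Ordinal.ToType.mk (o := o)) ⟨γ, hγ⟩) = y ((Ordinal.ToType.mk (o := o)) ⟨γ, hγ⟩) := by
        intro γ hγ hγβ
        refine hagr _ ?_
        have h1 : Ordinal.typein (α := o.ToType) (· < ·) ((Ordinal.ToType.mk (o := o)) ⟨γ, hγ⟩) = γ := by
          rw [Ordinal.ToType.mk_apply]; exact Ordinal.typein_enum _ _
        have : Ordinal.typein (α := o.ToType) (· < ·) ((Ordinal.ToType.mk (o := o)) ⟨γ, hγ⟩)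
            < Ordinal.typein (α := o.ToType) (· < ·) a := by
          rw [h1, ← hβdef]; exact hγβ
        exact (Ordinal.typein_lt_typein _).mp this
      have hbuild : build p r0 r1 o x β = build p r0 r1 o y β :=
        build_local p r0 r1 o β x y hagree
      -- the split nodes are incomparable
      have hbnx : bn x β = u1 (build p r0 r1 o x β) := by
        rw [hbndef]
        simp only [dif_pos hβo, hpos, hxa, if_true]
      have hbny : bn y β = u0 (build p r0 r1 o x β) := by
        rw [hbndef]
        simp only [dif_pos hβo, hpos, hya, hbuild]
        simp
      have hspec := hsp (build p r0 r1 o x β) (hle_p x β hβo.le)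
      have hincomp1 : ¬ S.po.le (bn y β) (bn x β) := by
        rw [hbnx, hbny]; exact hspec.2.2.2.2.1
      have hincomp2 : ¬ S.po.le (bn x β) (bn y β) := by
        rw [hbnx, hbny]; exact hspec.2.2.2.2.2
      -- both split nodes are below the common node (rt x).2 = (rt y).2
      have hβ1o : β + 1 ≤ o := (holim.succ_lt hβo).le
      have hdown : ∀ z : o.ToType → Bool, S.po.le (bn z β) ((rt z).2) := by
        intro z
        have hF1 : N.F (rt z).1 (bn z β) := by
          refine N.mono _ _ _ ?_ (hforce z β hβo)
          calc (rt z).1 ≤ build p r0 r1 o z o := hrt1 z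
            _ ≤ build p r0 r1 o z (β + 1) := by
                have := hmono z o le_rfl (β + 1) ?_
                · exact this
                · rw [Ordinal.add_one_eq_succ]; exact hβ1o
        have hcomp := N.forcesChain _ _ _ hF1 (hrt3 z)
        refine S.le_of_comp hcomp ?_
        rw [hrt2 z]
        exact hbn_lvl z β hβo
      have hx' : S.po.le (bn x β) ((rt x).2) := hdown x
      have hy' : S.po.le (bn y β) ((rt x).2) := heq ▸ hdown y
      -- derive comparability, contradiction
      letI := S.po
      rcases eq_or_lt_of_le hx' with hex | hx2
      · rcases eq_or_lt_of_le hy' with hey | hy2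
        · exact hincomp1 (le_of_eq (hey.trans hex.symm))
        · exact hincomp1 (le_of_lt (hex ▸ hy2))
      · rcases eq_or_lt_of_le hy' with hey | hy2
        · exact hincomp2 (le_of_lt (hey ▸ hx2))
        · rcases S.comp_of_lt hx2 hy2 with h | h
          · exact hincomp2 h
          · exact hincomp1 h
    have hinj : Function.Injective (fun x : o.ToType → Bool => (rt x).2) := by
      intro x y hxy
      by_contra hne
      have hAne : {a : o.ToType | x a ≠ y a}.Nonempty := by
        rcases Function.ne_iff.mp hne with ⟨a, ha⟩
        exact ⟨a, ha⟩
      set a := (wellFounded_lt (α := o.ToType)).min _ hAne with hadef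
      have haA : x a ≠ y a := (wellFounded_lt (α := o.ToType)).min_mem _ hAne
      have hagr : ∀ c : o.ToType, c < a → x c = y c := by
        intro c hc
        by_contra hcne
        exact (wellFounded_lt (α := o.ToType)).not_lt_min _ hcne hc
      have hxy' : (rt x).2 = (rt y).2 := hxy
      cases hxa : x a with
      | false =>
        cases hya : y a with
        | false => exact haA (hxa.trans hya.symm)
        | true => exact hmain y x a (fun c hc => (hagr c hc).symm) hya hxa hxy'.symm
      | true =>
        cases hya : y a with
        | false => exact hmain x y a hagr hxa hya hxy'
        | true => exact haA (hxa.trans hya.symm)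
    have hcount : lam ≤ #{t : S.carrier // S.lvl t = βstar} := by
      calc lam ≤ 2 ^ μ := hμmem
        _ = #(o.ToType → Bool) := by
            rw [Cardinal.mk_arrow, Cardinal.lift_uzero, Cardinal.mk_bool, Cardinal.lift_two,
              Cardinal.mk_toType, hcardo]
        _ ≤ #{t : S.carrier // S.lvl t = βstar} :=
            Cardinal.mk_le_of_injective (f := fun x => ⟨(rt x).2, hrt2 x⟩)
              fun x y hxy => hinj (congrArg Subtype.val hxy)
    exact absurd (hcount.trans_lt (S.levels_small βstar)) (lt_irrefl lam)
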